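/- Maassen–Uffink uncertainty relation: let (e_i)_{i=1}^n and (f_j)_{j=1}^n be two orthonormal bases of ℂⁿ and let ψ ∈ ℂⁿ be a unit vector. Define the outcome distributions p(i) = |⟨e_i, ψ⟩|² and q(j) = |⟨f_j, ψ⟩|². Then H(p) + H(q) ≥ −log( max_{i,j} |⟨e_i, f_j⟩|² ), where H denotes the Shannon entropy H(p) = −Σ_i p(i) log p(i). -/

import Mathlib

open Complex Finset Set

/-- `r ^ w` for nonnegative real base and complex exponent, with `0 ^ w = 0`. -/
noncomputable def mpow (r : ℝ) (w : ℂ) : ℂ :=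
  if r = 0 then 0 else Complex.exp (w * Real.log r)

lemma mpow_differentiable (r : ℝ) : Differentiable ℂ (fun w => mpow r w) := by
  unfold mpow
  by_cases h : r = 0
  · simp [h]
  · simp only [h, if_false]
    exact Complex.differentiable_exp.comp (differentiable_id.mul_const _)

lemma norm_mpow (r : ℝ) (hr : 0 < r) (w : ℂ) : ‖mpow r w‖ = r ^ w.re := by
  rw [mpow, if_neg (ne_of_gt hr), Complex.norm_exp,
    Real.rpow_def_of_pos hr]
  congr 1
  simp [Complex.mul_re, mul_comm]

lemma mpow_zero_exp (r : ℝ) (hr : r ≠ 0) : mpow r 0 = 1 := by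
  simp [mpow, hr]

lemma norm_mpow_mul (x : ℂ) (w : ℂ) (hw : 0 < w.re) :
    ‖mpow ‖x‖ (w - 1) * x‖ = ‖x‖ ^ w.re := by
  by_cases hx : x = 0
  · simp [hx, Real.zero_rpow (ne_of_gt hw)]
  · have h : (0:ℝ) < ‖x‖ := norm_pos_iff.mpr hx
    rw [norm_mul, norm_mpow _ h, Complex.sub_re, Complex.one_re]
    rw [show ‖x‖ ^ (w.re - 1) * ‖x‖ = ‖x‖ ^ (w.re - 1) * ‖x‖ ^ (1:ℝ) by rw [Real.rpow_one],
      ← Real.rpow_add h, sub_add_cancel]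

/-- for `0 ≤ r` and `e ∈ [s, t]`, `r ^ e ≤ r ^ s + r ^ t`. -/
lemma rpow_le_add_of_mem (r : ℝ) (hr : 0 ≤ r) {e s t : ℝ} (hs : s ≤ e) (ht : e ≤ t)
    (hs0 : 0 < s) : r ^ e ≤ r ^ s + r ^ t := by
  rcases le_or_gt r 1 with h1 | h1
  · rcases eq_or_lt_of_le hr with h0 | h0
    · rw [← h0]
      rw [Real.zero_rpow (by nlinarith), Real.zero_rpow (ne_of_gt hs0),
        Real.zero_rpow (by nlinarith)]
      norm_num
    · calc r ^ e ≤ r ^ s := Real.rpow_le_rpow_of_exponent_ge h0 h1 hs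
        _ ≤ r ^ s + r ^ t := le_add_of_nonneg_right (Real.rpow_nonneg hr t)
  · calc r ^ e ≤ r ^ t := Real.rpow_le_rpow_of_exponent_le h1.le ht
      _ ≤ r ^ s + r ^ t := le_add_of_nonneg_left (Real.rpow_nonneg hr s)

lemma bilinear_est {n : ℕ} (T : Fin n → Fin n → ℂ) {C : ℝ} (hC : 0 ≤ C)
    (hT : ∀ j i, ‖T j i‖ ≤ C)
    (h2 : ∀ u : Fin n → ℂ, ∑ j, ‖∑ i, T j i * u i‖ ^ 2 ≤ ∑ i, ‖u i‖ ^ 2)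
    (a y : Fin n → ℂ) {θ : ℝ} (hθ0 : 0 < θ) (hθ1 : θ < 1) :
    ‖∑ j, y j * ∑ i, T j i * a i‖ ≤
      C ^ θ * (∑ i, ‖a i‖ ^ (2/(1+θ))) ^ ((1+θ)/2) *
        (∑ j, ‖y j‖ ^ (2/(1+θ))) ^ ((1+θ)/2) := by
  classical
  set p : ℝ := 2/(1+θ) with hpdef
  have h1θ : (0:ℝ) < 1 + θ := by linarith
  have hp0 : 0 < p := by positivity
  have hp2 : 0 < p/2 := by positivity
  set α : ℂ → ℂ := fun z => (↑(p/2) : ℂ) * (1 + z) with hαdef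
  have hre : ∀ z : ℂ, (α z).re = p/2 * (1 + z.re) := by
    intro z
    simp [hαdef, Complex.re_ofReal_mul]
  set u : ℂ → Fin n → ℂ := fun z i => mpow ‖a i‖ (α z - 1) * a i with hudef
  set v : ℂ → Fin n → ℂ := fun z j => mpow ‖y j‖ (α z - 1) * y j with hvdef
  set F : ℂ → ℂ := fun z => ∑ j, v z j * ∑ i, T j i * u z i with hFdef
  set A : ℝ := ∑ i, ‖a i‖ ^ p with hAdef
  set Y : ℝ := ∑ j, ‖y j‖ ^ p with hYdef
  have hA0 : 0 ≤ A := Finset.sum_nonneg fun i _ => Real.rpow_nonneg (norm_nonneg _) _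
  have hY0 : 0 ≤ Y := Finset.sum_nonneg fun j _ => Real.rpow_nonneg (norm_nonneg _) _
  -- differentiability
  have hαdiff : Differentiable ℂ (fun z => α z - 1) := by
    apply Differentiable.sub_const
    exact (differentiable_const _).mul ((differentiable_const _).add differentiable_id)
  have hdF : Differentiable ℂ F := by
    apply Differentiable.fun_sum
    intro j _
    apply Differentiable.mul
    · exact ((mpow_differentiable ‖y j‖).comp hαdiff).mul_const _
    · apply Differentiable.fun_sum
      intro i _
      exact (((mpow_differentiable ‖a i‖).comp hαdiff).mul_const _).const_mul _
  -- norms of u, v on the strip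
  have hu_norm : ∀ (z : ℂ) (i : Fin n), 0 < (α z).re → ‖u z i‖ = ‖a i‖ ^ (α z).re :=
    fun z i h => norm_mpow_mul _ _ h
  have hv_norm : ∀ (z : ℂ) (j : Fin n), 0 < (α z).re → ‖v z j‖ = ‖y j‖ ^ (α z).re :=
    fun z j h => norm_mpow_mul _ _ h
  -- generic bound on the closed strip
  have hFbound : ∀ z ∈ Complex.HadamardThreeLines.verticalClosedStrip 0 1,
      ‖F z‖ ≤ ∑ j, (‖y j‖^(p/2) + ‖y j‖^p) * ∑ i, C * (‖a i‖^(p/2) + ‖a i‖^p) := by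
    intro z hz
    have hz' : z.re ∈ Set.Icc (0:ℝ) 1 := hz
    have hαre1 : p/2 ≤ (α z).re := by
      rw [hre]; nlinarith [hz'.1]
    have hαre2 : (α z).re ≤ p := by
      rw [hre]; nlinarith [hz'.2]
    have hαpos : 0 < (α z).re := lt_of_lt_of_le hp2 hαre1
    calc ‖F z‖ ≤ ∑ j, ‖v z j * ∑ i, T j i * u z i‖ := norm_sum_le _ _
      _ ≤ ∑ j, (‖y j‖^(p/2) + ‖y j‖^p) * ∑ i, C * (‖a i‖^(p/2) + ‖a i‖^p) := by
          apply Finset.sum_le_sum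
          intro j _
          rw [norm_mul]
          apply mul_le_mul
          · rw [hv_norm z j hαpos]
            exact rpow_le_add_of_mem _ (norm_nonneg _) hαre1 hαre2 hp2
          · calc ‖∑ i, T j i * u z i‖ ≤ ∑ i, ‖T j i * u z i‖ := norm_sum_le _ _
              _ ≤ ∑ i, C * (‖a i‖^(p/2) + ‖a i‖^p) := by
                  apply Finset.sum_le_sum
                  intro i _
                  rw [norm_mul]
                  apply mul_le_mul (hT j i) ?_ (norm_nonneg _) hC
                  rw [hu_norm z i hαpos]
                  exact rpow_le_add_of_mem _ (norm_nonneg _) hαre1 hαre2 hp2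
          · exact norm_nonneg _
          · positivity
  have hBdd : BddAbove ((norm ∘ F) '' Complex.HadamardThreeLines.verticalClosedStrip 0 1) := by
    refine ⟨∑ j, (‖y j‖^(p/2) + ‖y j‖^p) * ∑ i, C * (‖a i‖^(p/2) + ‖a i‖^p), ?_⟩
    rintro r ⟨z, hz, rfl⟩
    exact hFbound z hz
  -- edge at Re z = 0
  have hEdge0 : ∀ z ∈ Complex.re ⁻¹' {0}, ‖F z‖ ≤ Real.sqrt Y * Real.sqrt A := by
    intro z hz
    have hz0 : z.re = 0 := hz
    have hαre : (α z).re = p/2 := by rw [hre, hz0]; ring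
    have hvn : ∀ j, ‖v z j‖ = ‖y j‖ ^ (p/2) := fun j => by
      rw [hv_norm z j (by rw [hαre]; exact hp2), hαre]
    have hun : ∀ i, ‖u z i‖ = ‖a i‖ ^ (p/2) := fun i => by
      rw [hu_norm z i (by rw [hαre]; exact hp2), hαre]
    have hsq : ∀ (r : ℝ), 0 ≤ r → (r ^ (p/2))^(2:ℕ) = r ^ p := by
      intro r hr
      rw [← Real.rpow_natCast (r ^ (p/2)) 2, ← Real.rpow_mul hr]
      norm_num
    calc ‖F z‖ ≤ ∑ j, ‖v z j * ∑ i, T j i * u z i‖ := norm_sum_le _ _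
      _ = ∑ j, ‖v z j‖ * ‖∑ i, T j i * u z i‖ := by simp [norm_mul]
      _ ≤ Real.sqrt (∑ j, ‖v z j‖ ^ 2) * Real.sqrt (∑ j, ‖∑ i, T j i * u z i‖ ^ 2) :=
          Real.sum_mul_le_sqrt_mul_sqrt _ _ _
      _ ≤ Real.sqrt Y * Real.sqrt A := by
          apply mul_le_mul
          · apply Real.sqrt_le_sqrt
            apply le_of_eq
            apply Finset.sum_congr rfl
            intro j _
            rw [hvn j, hsq _ (norm_nonneg _)]
          · apply Real.sqrt_le_sqrt
            calc ∑ j, ‖∑ i, T j i * u z i‖ ^ 2 ≤ ∑ i, ‖u z i‖ ^ 2 := h2 _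
              _ = A := by
                  apply Finset.sum_congr rfl
                  intro i _
                  rw [hun i, hsq _ (norm_nonneg _)]
          · exact Real.sqrt_nonneg _
          · exact Real.sqrt_nonneg _
  -- edge at Re z = 1
  have hEdge1 : ∀ z ∈ Complex.re ⁻¹' {1}, ‖F z‖ ≤ C * Y * A := by
    intro z hz
    have hz1 : z.re = 1 := hz
    have hαre : (α z).re = p := by rw [hre, hz1]; ring
    have hαpos : 0 < (α z).re := by rw [hαre]; exact hp0
    calc ‖F z‖ ≤ ∑ j, ‖v z j * ∑ i, T j i * u z i‖ := norm_sum_le _ _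
      _ ≤ ∑ j, ‖y j‖ ^ p * (C * A) := by
          apply Finset.sum_le_sum
          intro j _
          rw [norm_mul]
          apply mul_le_mul
          · rw [hv_norm z j hαpos, hαre]
          · calc ‖∑ i, T j i * u z i‖ ≤ ∑ i, ‖T j i * u z i‖ := norm_sum_le _ _
              _ ≤ ∑ i, C * ‖a i‖ ^ p := by
                  apply Finset.sum_le_sum
                  intro i _
                  rw [norm_mul]
                  exact mul_le_mul (hT j i)
                    (by rw [hu_norm z i hαpos, hαre]) (norm_nonneg _) hC
              _ = C * A := by rw [← Finset.mul_sum]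
          · exact norm_nonneg _
          · exact Real.rpow_nonneg (norm_nonneg _) _
      _ = Y * (C * A) := by rw [← Finset.sum_mul]
      _ = C * Y * A := by ring
  -- three lines
  have hmem : (θ:ℂ) ∈ Complex.HadamardThreeLines.verticalClosedStrip 0 1 := by
    simp only [Complex.HadamardThreeLines.verticalClosedStrip, Set.mem_preimage,
      Complex.ofReal_re]
    exact ⟨hθ0.le, hθ1.le⟩
  have h3 := Complex.HadamardThreeLines.norm_le_interp_of_mem_verticalClosedStrip' zero_lt_one hmem
    hdF.diffContOnCl hBdd hEdge0 hEdge1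
  rw [Complex.ofReal_re] at h3
  simp only [sub_zero, div_one] at h3
  -- F θ = the bilinear form
  have hFθ : F (θ:ℂ) = ∑ j, y j * ∑ i, T j i * a i := by
    have hα1 : α (θ:ℂ) - 1 = 0 := by
      have h' : (p/2) * (1+θ) = 1 := by
        rw [hpdef]; field_simp
      rw [sub_eq_zero, hαdef]
      show ((p/2 : ℝ):ℂ) * (1 + (θ:ℂ)) = 1
      rw [show ((1:ℂ) + (θ:ℂ)) = ((1 + θ : ℝ) : ℂ) by push_cast; ring,
        ← Complex.ofReal_mul, h', Complex.ofReal_one]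
    have hu' : ∀ i, u (θ:ℂ) i = a i := by
      intro i
      rw [hudef]
      simp only
      rw [hα1]
      by_cases hai : a i = 0
      · simp [hai]
      · rw [mpow_zero_exp _ (norm_ne_zero_iff.mpr hai), one_mul]
    have hv' : ∀ j, v (θ:ℂ) j = y j := by
      intro j
      rw [hvdef]
      simp only
      rw [hα1]
      by_cases hyj : y j = 0
      · simp [hyj]
      · rw [mpow_zero_exp _ (norm_ne_zero_iff.mpr hyj), one_mul]
    rw [hFdef]
    simp only
    apply Finset.sum_congr rfl
    intro j _
    rw [hv' j]
    congr 1
    apply Finset.sum_congr rfl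
    intro i _
    rw [hu' i]
  rw [hFθ] at h3
  refine le_trans h3 (le_of_eq ?_)
  -- algebra on the right-hand side
  rw [Real.sqrt_eq_rpow, Real.sqrt_eq_rpow]
  rw [Real.mul_rpow (Real.rpow_nonneg hY0 _) (Real.rpow_nonneg hA0 _)]
  rw [Real.mul_rpow (mul_nonneg hC hY0) hA0, Real.mul_rpow hC hY0]
  rw [← Real.rpow_mul hY0, ← Real.rpow_mul hA0]
  rw [show Y ^ ((1:ℝ)/2 * (1-θ)) * A ^ ((1:ℝ)/2 * (1-θ)) * (C ^ θ * Y ^ θ * A ^ θ)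
      = C ^ θ * (A ^ ((1:ℝ)/2 * (1-θ)) * A ^ θ) * (Y ^ ((1:ℝ)/2 * (1-θ)) * Y ^ θ) by ring]
  rw [← Real.rpow_add' hA0 (by intro h; nlinarith), ← Real.rpow_add' hY0 (by intro h; nlinarith)]
  congr 2 <;> ring

lemma rt_norm {n : ℕ} (T : Fin n → Fin n → ℂ) {C : ℝ} (hC : 0 ≤ C)
    (hT : ∀ j i, ‖T j i‖ ≤ C)
    (h2 : ∀ u : Fin n → ℂ, ∑ j, ‖∑ i, T j i * u i‖ ^ 2 ≤ ∑ i, ‖u i‖ ^ 2)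
    (a b : Fin n → ℂ) (hb : ∀ j, b j = ∑ i, T j i * a i)
    {θ : ℝ} (hθ0 : 0 < θ) (hθ1 : θ < 1) :
    (∑ j, ‖b j‖ ^ (2/(1-θ))) ^ ((1-θ)/2) ≤
      C ^ θ * (∑ i, ‖a i‖ ^ (2/(1+θ))) ^ ((1+θ)/2) := by
  classical
  have h1θ : (0:ℝ) < 1 + θ := by linarith
  have h1θ' : (0:ℝ) < 1 - θ := by linarith
  set p : ℝ := 2/(1+θ) with hpdef
  set q : ℝ := 2/(1-θ) with hqdef
  have hq2 : 2 < q := by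
    rw [hqdef, lt_div_iff₀ h1θ']; nlinarith
  have hRHS0 : 0 ≤ C ^ θ * (∑ i, ‖a i‖ ^ p) ^ ((1+θ)/2) := by positivity
  set Q : ℝ := ∑ j, ‖b j‖ ^ q with hQdef
  have hQ0 : 0 ≤ Q := Finset.sum_nonneg fun j _ => Real.rpow_nonneg (norm_nonneg _) _
  rcases eq_or_lt_of_le hQ0 with hQz | hQpos
  · rw [← hQz, Real.zero_rpow (by positivity)]
    exact hRHS0
  · -- dual vector
    set y : Fin n → ℂ := fun j => ((‖b j‖ ^ (q-2) : ℝ) : ℂ) * (starRingEnd ℂ) (b j) with hydef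
    have hyb : ∀ j, y j * b j = ((‖b j‖ ^ q : ℝ) : ℂ) := by
      intro j
      rw [hydef]
      simp only
      rw [mul_assoc]
      rw [show (starRingEnd ℂ) (b j) * b j = ((‖b j‖^(2:ℕ) : ℝ) : ℂ) by
        rw [mul_comm, Complex.mul_conj, Complex.normSq_eq_norm_sq]]
      rw [← Complex.ofReal_mul]
      congr 1
      rw [← Real.rpow_natCast ‖b j‖ 2, ← Real.rpow_add' (norm_nonneg _) (by intro h; nlinarith)]
      norm_num
    have hyn : ∀ j, ‖y j‖ = ‖b j‖ ^ (q-1) := by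
      intro j
      by_cases hbj : b j = 0
      · simp [hydef, hbj, Real.zero_rpow (show q-2 ≠ 0 by nlinarith),
          Real.zero_rpow (show q-1 ≠ 0 by nlinarith)]
      · have hb0 : (0:ℝ) < ‖b j‖ := norm_pos_iff.mpr hbj
        calc ‖y j‖ = ‖b j‖ ^ (q-2) * ‖b j‖ := by
              simp only [hydef, norm_mul, Complex.norm_real,
                RCLike.norm_conj, Real.norm_eq_abs]
              rw [_root_.abs_of_nonneg (Real.rpow_nonneg (norm_nonneg (b j)) (q-2))]
          _ = ‖b j‖ ^ (q-1) := by
              rw [show q-1 = (q-2)+1 by ring, Real.rpow_add hb0, Real.rpow_one]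
    have hyp : ∀ j, ‖y j‖ ^ p = ‖b j‖ ^ q := by
      intro j
      rw [hyn j, ← Real.rpow_mul (norm_nonneg _)]
      congr 1
      rw [hqdef, hpdef]
      field_simp
      ring
    have hbil := bilinear_est T hC hT h2 a y hθ0 hθ1
    have hLHS : ‖∑ j, y j * ∑ i, T j i * a i‖ = Q := by
      have h' : ∀ j, y j * ∑ i, T j i * a i = ((‖b j‖ ^ q : ℝ) : ℂ) := by
        intro j
        rw [← hb j, hyb j]
      rw [Finset.sum_congr rfl fun j _ => h' j, ← Complex.ofReal_sum]
      rw [Complex.norm_real, Real.norm_eq_abs, _root_.abs_of_nonneg hQ0]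
    have hYQ : (∑ j, ‖y j‖ ^ p) = Q := Finset.sum_congr rfl fun j _ => hyp j
    rw [hLHS, hYQ] at hbil
    have hQsplit : Q = Q ^ ((1-θ)/2) * Q ^ ((1+θ)/2) := by
      rw [← Real.rpow_add hQpos, show (1-θ)/2 + (1+θ)/2 = 1 by ring, Real.rpow_one]
    have hQp : (0:ℝ) < Q ^ ((1+θ)/2) := Real.rpow_pos_of_pos hQpos _
    have hfin : Q ^ ((1-θ)/2) * Q ^ ((1+θ)/2) ≤
        (C ^ θ * (∑ i, ‖a i‖ ^ p) ^ ((1+θ)/2)) * Q ^ ((1+θ)/2) := by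
      rw [← hQsplit]
      exact hbil
    exact le_of_mul_le_mul_right hfin hQp

lemma hasDerivAt_rpow_exp {r : ℝ} (hr : 0 ≤ r) {s : ℝ} (hs : 0 < s) :
    HasDerivAt (fun t : ℝ => r ^ t) (r ^ s * Real.log r) s := by
  rcases eq_or_lt_of_le hr with h0 | h0
  · have hval : r ^ s * Real.log r = 0 := by
      rw [← h0, Real.zero_rpow (ne_of_gt hs), zero_mul]
    rw [hval]
    have hev : (fun _ : ℝ => (0:ℝ)) =ᶠ[nhds s] (fun t : ℝ => r ^ t) := by
      filter_upwards [Ioi_mem_nhds hs] with t ht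
      rw [← h0, Real.zero_rpow (ne_of_gt ht)]
    exact (hasDerivAt_const s (0:ℝ)).congr_of_eventuallyEq hev.symm
  · exact (Real.hasStrictDerivAt_const_rpow h0 s).hasDerivAt

lemma entropy_lower {n : ℕ} (T : Fin n → Fin n → ℂ) {C : ℝ} (hC : 0 < C)
    (hT : ∀ j i, ‖T j i‖ ≤ C)
    (h2 : ∀ u : Fin n → ℂ, ∑ j, ‖∑ i, T j i * u i‖ ^ 2 ≤ ∑ i, ‖u i‖ ^ 2)
    (a b : Fin n → ℂ) (hb : ∀ j, b j = ∑ i, T j i * a i)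
    (hA : ∑ i, ‖a i‖ ^ 2 = (1:ℝ)) (hB : ∑ j, ‖b j‖ ^ 2 = (1:ℝ)) :
    -(2 * Real.log C) ≤
      (∑ i, Real.negMulLog (‖a i‖ ^ 2)) + ∑ j, Real.negMulLog (‖b j‖ ^ 2) := by
  classical
  set P : Fin n → ℝ := fun i => ‖a i‖ ^ 2 with hPdef
  set Q : Fin n → ℝ := fun j => ‖b j‖ ^ 2 with hQdef
  have hP0 : ∀ i, 0 ≤ P i := fun i => sq_nonneg _
  have hQ0 : ∀ j, 0 ≤ Q j := fun j => sq_nonneg _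
  set G : ℝ → ℝ := fun s => ∑ i, P i ^ s with hGdef
  set K : ℝ → ℝ := fun s => ∑ j, Q j ^ s with hKdef
  -- positivity of G, K
  have hex : ∃ i, 0 < P i := by
    by_contra h
    push_neg at h
    have : (∑ i, P i) = 0 := le_antisymm
      (Finset.sum_nonpos fun i _ => h i) (Finset.sum_nonneg fun i _ => hP0 i)
    rw [hA] at this
    norm_num at this
  have hexQ : ∃ j, 0 < Q j := by
    by_contra h
    push_neg at h
    have : (∑ j, Q j) = 0 := le_antisymm
      (Finset.sum_nonpos fun j _ => h j) (Finset.sum_nonneg fun j _ => hQ0 j)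
    rw [hB] at this
    norm_num at this
  have hGpos : ∀ s : ℝ, 0 < G s := by
    intro s
    obtain ⟨i0, hi0⟩ := hex
    calc (0:ℝ) < P i0 ^ s := Real.rpow_pos_of_pos hi0 s
      _ ≤ G s := Finset.single_le_sum
          (fun i _ => Real.rpow_nonneg (hP0 i) s) (Finset.mem_univ i0)
  have hKpos : ∀ s : ℝ, 0 < K s := by
    intro s
    obtain ⟨j0, hj0⟩ := hexQ
    calc (0:ℝ) < Q j0 ^ s := Real.rpow_pos_of_pos hj0 s
      _ ≤ K s := Finset.single_le_sum
          (fun j _ => Real.rpow_nonneg (hQ0 j) s) (Finset.mem_univ j0)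
  have hG1 : G 1 = 1 := by
    rw [hGdef]
    simp only [Real.rpow_one]
    exact hA
  have hK1 : K 1 = 1 := by
    rw [hKdef]
    simp only [Real.rpow_one]
    exact hB
  set Φ : ℝ → ℝ := fun θ => θ * Real.log C + ((1+θ)/2) * Real.log (G ((1+θ)⁻¹))
      - ((1-θ)/2) * Real.log (K ((1-θ)⁻¹)) with hΦdef
  -- Step A : Φ ≥ 0 on (0,1)
  have hstepA : ∀ θ : ℝ, 0 < θ → θ < 1 → 0 ≤ Φ θ := by
    intro θ hθ0 hθ1
    have h1θ : (0:ℝ) < 1 + θ := by linarith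
    have h1θ' : (0:ℝ) < 1 - θ := by linarith
    have hrt := rt_norm T hC.le hT h2 a b hb hθ0 hθ1
    have hKrw : (∑ j, ‖b j‖ ^ (2/(1-θ))) = K ((1-θ)⁻¹) := by
      apply Finset.sum_congr rfl
      intro j _
      show ‖b j‖ ^ (2/(1-θ)) = (‖b j‖ ^ (2:ℕ) : ℝ) ^ ((1-θ)⁻¹)
      rw [← Real.rpow_natCast ‖b j‖ 2, ← Real.rpow_mul (norm_nonneg _)]
      congr 1
    have hGrw : (∑ i, ‖a i‖ ^ (2/(1+θ))) = G ((1+θ)⁻¹) := by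
      apply Finset.sum_congr rfl
      intro i _
      show ‖a i‖ ^ (2/(1+θ)) = (‖a i‖ ^ (2:ℕ) : ℝ) ^ ((1+θ)⁻¹)
      rw [← Real.rpow_natCast ‖a i‖ 2, ← Real.rpow_mul (norm_nonneg _)]
      congr 1
    rw [hKrw, hGrw] at hrt
    have hL : 0 < K ((1-θ)⁻¹) ^ ((1-θ)/2) := Real.rpow_pos_of_pos (hKpos _) _
    have hlog := Real.log_le_log hL hrt
    rw [Real.log_rpow (hKpos _), Real.log_mul (ne_of_gt (Real.rpow_pos_of_pos hC θ)) (ne_of_gt (Real.rpow_pos_of_pos (hGpos _) _)),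
      Real.log_rpow hC, Real.log_rpow (hGpos _)] at hlog
    rw [hΦdef]
    simp only
    linarith
  -- Step B : derivative of Φ at 0
  set SG : ℝ := ∑ i, P i * Real.log (P i) with hSGdef
  set SK : ℝ := ∑ j, Q j * Real.log (Q j) with hSKdef
  have hGd : HasDerivAt G SG 1 := by
    rw [hSGdef]
    apply HasDerivAt.fun_sum
    intro i _
    have := hasDerivAt_rpow_exp (hP0 i) (zero_lt_one)
    rwa [Real.rpow_one] at this
  have hKd : HasDerivAt K SK 1 := by
    rw [hSKdef]
    apply HasDerivAt.fun_sum
    intro j _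
    have := hasDerivAt_rpow_exp (hQ0 j) (zero_lt_one)
    rwa [Real.rpow_one] at this
  have hι : HasDerivAt (fun θ : ℝ => (1+θ)⁻¹) (-1) 0 := by
    have h := ((hasDerivAt_id (0:ℝ)).const_add 1).inv (by norm_num)
    refine h.congr_deriv ?_
    norm_num
  have hκ : HasDerivAt (fun θ : ℝ => (1-θ)⁻¹) 1 0 := by
    have h := ((hasDerivAt_id (0:ℝ)).const_sub 1).inv (by norm_num)
    refine h.congr_deriv ?_
    norm_num
  have h10 : ((1:ℝ)+(0:ℝ))⁻¹ = 1 := by norm_num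
  have hGι : HasDerivAt (fun θ : ℝ => G ((1+θ)⁻¹)) (SG * (-1)) 0 := by
    have h := hGd
    rw [show (1:ℝ) = (fun θ : ℝ => (1+θ)⁻¹) 0 by norm_num] at h
    exact h.comp 0 hι
  have hKι : HasDerivAt (fun θ : ℝ => K ((1-θ)⁻¹)) (SK * 1) 0 := by
    have h := hKd
    rw [show (1:ℝ) = (fun θ : ℝ => (1-θ)⁻¹) 0 by norm_num] at h
    exact h.comp 0 hκ
  have hGv : G ((fun θ : ℝ => (1+θ)⁻¹) 0) = 1 := by
    simp only
    rw [h10, hG1]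
  have hKv : K ((fun θ : ℝ => (1-θ)⁻¹) 0) = 1 := by
    show K ((1-(0:ℝ))⁻¹) = 1
    rw [show ((1:ℝ)-(0:ℝ))⁻¹ = 1 by norm_num, hK1]
  have hlogGι : HasDerivAt (fun θ : ℝ => Real.log (G ((1+θ)⁻¹))) (SG * (-1)) 0 := by
    have hlog : HasDerivAt Real.log (1:ℝ)⁻¹ (G ((1+(0:ℝ))⁻¹)) := by
      rw [h10, hG1]
      exact Real.hasDerivAt_log one_ne_zero
    have h := hlog.comp 0 hGι
    exact h.congr_deriv (by simp)
  have hlogKι : HasDerivAt (fun θ : ℝ => Real.log (K ((1-θ)⁻¹))) (SK * 1) 0 := by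
    have hlog : HasDerivAt Real.log (1:ℝ)⁻¹ (K ((1-(0:ℝ))⁻¹)) := by
      rw [show ((1:ℝ)-(0:ℝ))⁻¹ = 1 by norm_num, hK1]
      exact Real.hasDerivAt_log one_ne_zero
    have h := hlog.comp 0 hKι
    exact h.congr_deriv (by simp)
  have hu1 : HasDerivAt (fun θ : ℝ => (1+θ)/2) (1/2 : ℝ) 0 := by
    have h := ((hasDerivAt_id (0:ℝ)).const_add 1).div_const 2
    exact h
  have hu2 : HasDerivAt (fun θ : ℝ => (1-θ)/2) (-(1/2) : ℝ) 0 := by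
    have h := ((hasDerivAt_id (0:ℝ)).const_sub 1).div_const 2
    refine h.congr_deriv ?_
    norm_num
  have hW : HasDerivAt (fun θ : ℝ => ((1+θ)/2) * Real.log (G ((1+θ)⁻¹)))
      ((1/2) * Real.log (G ((1+(0:ℝ))⁻¹)) + ((1+(0:ℝ))/2) * (SG * (-1))) 0 :=
    hu1.mul hlogGι
  have hV : HasDerivAt (fun θ : ℝ => ((1-θ)/2) * Real.log (K ((1-θ)⁻¹)))
      ((-(1/2)) * Real.log (K ((1-(0:ℝ))⁻¹)) + ((1-(0:ℝ))/2) * (SK * 1)) 0 :=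
    hu2.mul hlogKι
  have hlin : HasDerivAt (fun θ : ℝ => θ * Real.log C) (Real.log C) 0 := by
    have h := (hasDerivAt_id (0:ℝ)).mul_const (Real.log C)
    simpa using h
  have hΦd : HasDerivAt Φ (Real.log C - SG/2 - SK/2) 0 := by
    have h := (hlin.add hW).sub hV
    refine h.congr_deriv ?_
    rw [h10, hG1]
    have : ((1:ℝ)-(0:ℝ))⁻¹ = 1 := by norm_num
    rw [this, hK1]
    simp [Real.log_one]
    ring
  -- Step C : positivity of the derivative
  have hΦ0 : Φ 0 = 0 := by
    rw [hΦdef]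
    simp only
    rw [h10, hG1]
    have : ((1:ℝ)-(0:ℝ))⁻¹ = 1 := by norm_num
    rw [this, hK1]
    simp [Real.log_one]
  have hslope := hasDerivAt_iff_tendsto_slope.mp hΦd
  have hmono : nhdsWithin (0:ℝ) (Set.Ioi 0) ≤ nhdsWithin (0:ℝ) {0}ᶜ :=
    nhdsWithin_mono 0 (fun x hx => ne_of_gt hx)
  have htend := hslope.mono_left hmono
  have hev : ∀ᶠ θ in nhdsWithin (0:ℝ) (Set.Ioi 0), 0 ≤ slope Φ 0 θ := by
    filter_upwards [Ioo_mem_nhdsGT_of_mem (Set.left_mem_Ico.mpr zero_lt_one)] with θ hθ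
    rw [slope_def_field]
    rw [hΦ0]
    apply div_nonneg
    · simpa using hstepA θ hθ.1 hθ.2
    · simpa using hθ.1.le
  have hD0 : 0 ≤ Real.log C - SG/2 - SK/2 := ge_of_tendsto htend hev
  -- Step D : conclusion
  have hsum1 : (∑ i, Real.negMulLog (‖a i‖ ^ 2)) = -SG := by
    rw [hSGdef]
    simp [Real.negMulLog, hPdef, Finset.sum_neg_distrib]
  have hsum2 : (∑ j, Real.negMulLog (‖b j‖ ^ 2)) = -SK := by
    rw [hSKdef]
    simp [Real.negMulLog, hQdef, Finset.sum_neg_distrib]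
  rw [hsum1, hsum2]
  linarith

/-- Shannon entropy of a distribution on a finite set,
`H(p) = -Σ_s p(s) log p(s)` (with `0 log 0 = 0`). -/
noncomputable def shannonEntropy {S : Type*} [Fintype S] (p : S → ℝ) : ℝ :=
  ∑ s, Real.negMulLog (p s)

lemma parseval_onb {n : ℕ} (g : OrthonormalBasis (Fin n) ℂ (EuclideanSpace ℂ (Fin n)))
    (x : EuclideanSpace ℂ (Fin n)) :
    ∑ i, ‖(inner ℂ (g i) x : ℂ)‖ ^ 2 = ‖x‖ ^ 2 := by
  have h1 : ‖g.repr x‖ = ‖x‖ := g.repr.norm_map x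
  have hrw : ∀ i, (inner ℂ (g i) x : ℂ) = (g.repr x) i :=
    fun i => (g.repr_apply_apply x i).symm
  calc ∑ i, ‖(inner ℂ (g i) x : ℂ)‖ ^ 2 = ∑ i, ‖(g.repr x) i‖ ^ 2 := by
        apply Finset.sum_congr rfl
        intro i _
        rw [hrw i]
    _ = ‖x‖ ^ 2 := by
        rw [← h1, EuclideanSpace.norm_eq,
          Real.sq_sqrt (Finset.sum_nonneg fun i _ => sq_nonneg _)]

/-- Maassen–Uffink entropic uncertainty relation: for two orthonormal bases
`e, f` of `ℂⁿ` and a unit vector `ψ`, the outcome distributions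
`p(i) = |⟨e_i, ψ⟩|²` and `q(j) = |⟨f_j, ψ⟩|²` satisfy
`H(p) + H(q) ≥ -log max_{i,j} |⟨e_i, f_j⟩|²`. -/
theorem maassen_uffink_uncertainty {n : ℕ}
    (e f : OrthonormalBasis (Fin n) ℂ (EuclideanSpace ℂ (Fin n)))
    (ψ : EuclideanSpace ℂ (Fin n)) (hψ : ‖ψ‖ = 1) :
    -Real.log (⨆ i : Fin n, ⨆ j : Fin n, ‖(inner ℂ (e i) (f j) : ℂ)‖ ^ 2) ≤
      shannonEntropy (fun i => ‖(inner ℂ (e i) ψ : ℂ)‖ ^ 2) +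
        shannonEntropy (fun j => ‖(inner ℂ (f j) ψ : ℂ)‖ ^ 2) := by
  classical
  rcases Nat.eq_zero_or_pos n with rfl | hn
  · exfalso
    have hz : ψ = 0 := Subsingleton.elim _ _
    rw [hz, norm_zero] at hψ
    norm_num at hψ
  set c : ℝ := ⨆ i : Fin n, ⨆ j : Fin n, ‖(inner ℂ (e i) (f j) : ℂ)‖ ^ 2 with hcdef
  set T : Fin n → Fin n → ℂ := fun j i => inner ℂ (f j) (e i) with hTdef
  set a : Fin n → ℂ := fun i => inner ℂ (e i) ψ with hadef
  set b : Fin n → ℂ := fun j => inner ℂ (f j) ψ with hbdef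
  -- the sup bounds all entries
  have hc_le : ∀ i j, ‖(inner ℂ (e i) (f j) : ℂ)‖ ^ 2 ≤ c := by
    intro i j
    have h1 : ‖(inner ℂ (e i) (f j) : ℂ)‖ ^ 2 ≤ ⨆ j', ‖(inner ℂ (e i) (f j') : ℂ)‖ ^ 2 :=
      le_ciSup (f := fun j' => ‖(inner ℂ (e i) (f j') : ℂ)‖ ^ 2)
        (Set.Finite.bddAbove (Set.finite_range _)) j
    have h2 : (⨆ j', ‖(inner ℂ (e i) (f j') : ℂ)‖ ^ 2) ≤ c :=
      le_ciSup (f := fun i' => ⨆ j', ‖(inner ℂ (e i') (f j') : ℂ)‖ ^ 2)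
        (Set.Finite.bddAbove (Set.finite_range _)) i
    exact h1.trans h2
  -- positivity of c
  have hcpos : 0 < c := by
    set i0 : Fin n := ⟨0, hn⟩
    have hnorm : ‖e i0‖ = 1 := e.orthonormal.1 i0
    have hsum : ∑ j, ‖(inner ℂ (f j) (e i0) : ℂ)‖ ^ 2 = 1 := by
      rw [parseval_onb f (e i0), hnorm]
      norm_num
    have hexj : ∃ j, (inner ℂ (f j) (e i0) : ℂ) ≠ 0 := by
      by_contra h
      push_neg at h
      rw [Finset.sum_congr rfl (fun j _ => by rw [h j, norm_zero])] at hsum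
      simp at hsum
    obtain ⟨j0, hj0⟩ := hexj
    have hnz : (0:ℝ) < ‖(inner ℂ (e i0) (f j0) : ℂ)‖ := by
      rw [norm_inner_symm]
      exact norm_pos_iff.mpr hj0
    have hsq : (0:ℝ) < ‖(inner ℂ (e i0) (f j0) : ℂ)‖ ^ 2 := by positivity
    exact lt_of_lt_of_le hsq (hc_le i0 j0)
  have hC : (0:ℝ) < Real.sqrt c := Real.sqrt_pos.mpr hcpos
  -- entry bound
  have hT : ∀ j i, ‖T j i‖ ≤ Real.sqrt c := by
    intro j i
    rw [hTdef]
    have hsym : ‖(inner ℂ (f j) (e i) : ℂ)‖ = ‖(inner ℂ (e i) (f j) : ℂ)‖ :=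
      norm_inner_symm _ _
    simp only
    rw [hsym]
    have := hc_le i j
    nlinarith [Real.sq_sqrt hcpos.le, Real.sqrt_nonneg c, norm_nonneg (inner ℂ (e i) (f j) : ℂ)]
  -- expansion of rows
  have hrow : ∀ (x : EuclideanSpace ℂ (Fin n)) (j : Fin n),
      (inner ℂ (f j) x : ℂ) = ∑ i, (inner ℂ (e i) x : ℂ) * T j i := by
    intro x j
    conv_lhs => rw [← e.sum_repr x]
    rw [inner_sum]
    apply Finset.sum_congr rfl
    intro i _
    rw [inner_smul_right, e.repr_apply_apply]
  have hbexp : ∀ j, b j = ∑ i, T j i * a i := by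
    intro j
    rw [hbdef]
    simp only
    rw [hrow ψ j]
    apply Finset.sum_congr rfl
    intro i _
    rw [mul_comm]
  -- ℓ² contraction
  have hcontr : ∀ u : Fin n → ℂ, ∑ j, ‖∑ i, T j i * u i‖ ^ 2 ≤ ∑ i, ‖u i‖ ^ 2 := by
    intro u
    set x : EuclideanSpace ℂ (Fin n) := ∑ i, u i • (e i : EuclideanSpace ℂ (Fin n)) with hxdef
    have hxinner : ∀ i, (inner ℂ (e i) x : ℂ) = u i := by
      intro i
      rw [hxdef, inner_sum]
      have : ∀ k ∈ Finset.univ, (inner ℂ (e i) (u k • e k) : ℂ)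
          = if k = i then u i else 0 := by
        intro k _
        rw [inner_smul_right]
        rcases eq_or_ne k i with rfl | hk
        · rw [orthonormal_iff_ite.mp e.orthonormal]
          simp
        · rw [orthonormal_iff_ite.mp e.orthonormal]
          simp only [if_neg (Ne.symm hk), mul_zero, if_neg hk]
      rw [Finset.sum_congr rfl this, Finset.sum_ite_eq' Finset.univ i fun _ => u i]
      simp
    have hTx : ∀ j, ∑ i, T j i * u i = (inner ℂ (f j) x : ℂ) := by
      intro j
      rw [hrow x j]
      apply Finset.sum_congr rfl
      intro i _
      rw [hxinner i, mul_comm]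
    have hxnorm : ∑ i, ‖u i‖ ^ 2 = ‖x‖ ^ 2 := by
      rw [← parseval_onb e x]
      apply Finset.sum_congr rfl
      intro i _
      rw [hxinner i]
    apply le_of_eq
    rw [hxnorm, ← parseval_onb f x]
    apply Finset.sum_congr rfl
    intro j _
    rw [hTx j]
  -- Parseval for ψ
  have hA : ∑ i, ‖a i‖ ^ 2 = (1:ℝ) := by
    rw [hadef]
    simp only
    rw [parseval_onb e ψ, hψ]
    norm_num
  have hB : ∑ j, ‖b j‖ ^ 2 = (1:ℝ) := by
    rw [hbdef]
    simp only
    rw [parseval_onb f ψ, hψ]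
    norm_num
  have hmain := entropy_lower T hC hT hcontr a b hbexp hA hB
  have hlog : 2 * Real.log (Real.sqrt c) = Real.log c := by
    rw [Real.log_sqrt hcpos.le]
    ring
  rw [hlog] at hmain
  exact hmain
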